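/- arXiv:1103.2485 — 2 statements merged into one kernel-verified Lean document; each statement's English description precedes it below -/
import Mathlib

section
/- Let U ⊆ ℂ be open, let u : ℂ → ℝ and a₁, a₂, b₁, b₂, σ : ℂ → ℂ be ℝ-differentiable on U. Let A_p := A_p(e^{u}/√2, a₁, a₂, b₁, b₂) and let B_k be the 5×5 complex matrix whose only nonzero entries are (1,2) ↦ −i·∂̄u, (2,1) ↦ i·∂̄u, (3,4) ↦ conj(σ), (4,3) ↦ −conj(σ). Then on U the matrix M := ∂̄A_p + (B_k·A_p − A_p·B_k) has all entries zero except: M[1,3] = −A₁, M[1,4] = −A₂, M[2,3] = −i·B₁, M[2,4] = −i·B₂, M[3,1] = A₁, M[4,1] = A₂, M[3,2] = i·B₁, M[4,2] = i·B₂, where A₁ := ∂̄a₁ + (∂̄u)·b₁ + a₂·conj(σ), A₂ := ∂̄a₂ + (∂̄u)·b₂ − a₁·conj(σ), B₁ := ∂̄b₁ + (∂̄u)·a₁ + b₂·conj(σ), B₂ := ∂̄b₂ + (∂̄u)·a₂ − b₁·conj(σ). (This computes the tension field of the Gauss map of a conformal immersion into S⁴ with respect to the normal metric.) -/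
open Complex Matrix

noncomputable section

attribute [local instance] Matrix.normedAddCommGroup Matrix.normedSpace

/-- Wirtinger derivative ∂G := (1/2)(∂ₓG − i∂ᵧG). -/
def wDz {E : Type*} [NormedAddCommGroup E] [NormedSpace ℂ E] (G : ℂ → E) (z : ℂ) : E :=
  (2⁻¹ : ℂ) • (fderiv ℝ G z 1 - Complex.I • fderiv ℝ G z Complex.I)

/-- Wirtinger derivative ∂̄G := (1/2)(∂ₓG + i∂ᵧG). -/
def wDzBar {E : Type*} [NormedAddCommGroup E] [NormedSpace ℂ E] (G : ℂ → E) (z : ℂ) : E :=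
  (2⁻¹ : ℂ) • (fderiv ℝ G z 1 + Complex.I • fderiv ℝ G z Complex.I)

/-- The 𝔭-part matrix A_p(r, a₁, a₂, b₁, b₂). -/
def Ap (r a₁ a₂ b₁ b₂ : ℂ) : Matrix (Fin 5) (Fin 5) ℂ :=
  !![0, -r, Complex.I * r, 0, 0;
     r, 0, 0, -a₁, -a₂;
     -(Complex.I * r), 0, 0, -(Complex.I * b₁), -(Complex.I * b₂);
     0, a₁, Complex.I * b₁, 0, 0;
     0, a₂, Complex.I * b₂, 0, 0]

/-- The 𝔨-part B_k of the Maurer–Cartan form of an adapted frame. -/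
def BKfun (u : ℂ → ℝ) (σ : ℂ → ℂ) (z : ℂ) : Matrix (Fin 5) (Fin 5) ℂ :=
  !![0, 0, 0, 0, 0;
     0, 0, -(Complex.I * wDzBar (fun w => (u w : ℂ)) z), 0, 0;
     0, Complex.I * wDzBar (fun w => (u w : ℂ)) z, 0, 0, 0;
     0, 0, 0, 0, (starRingEnd ℂ) (σ z);
     0, 0, 0, -((starRingEnd ℂ) (σ z)), 0]

lemma fderiv_matrix_apply (F : ℂ → Matrix (Fin 5) (Fin 5) ℂ) (z v : ℂ)
    (hF : DifferentiableAt ℝ F z) (i j : Fin 5) :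
    fderiv ℝ (fun w => F w i j) z v = fderiv ℝ F z v i j := by
  set L : Matrix (Fin 5) (Fin 5) ℂ →L[ℝ] ℂ :=
    ((ContinuousLinearMap.proj (R := ℝ) (φ := fun _ : Fin 5 => ℂ) j).comp
        (ContinuousLinearMap.proj (R := ℝ) (φ := fun _ : Fin 5 => Fin 5 → ℂ) i)) with hL
  have h := (L.hasFDerivAt (x := F z)).comp z hF.hasFDerivAt
  rw [show (fun w => F w i j) = (⇑L ∘ F) from rfl, h.fderiv]; rfl

lemma wDzBar_entry {F : ℂ → Matrix (Fin 5) (Fin 5) ℂ} {z : ℂ}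
    (hF : DifferentiableAt ℝ F z) (i j : Fin 5) :
    wDzBar (fun w => F w i j) z = wDzBar F z i j := by
  simp only [wDzBar, fderiv_matrix_apply F z _ hF i j]
  rfl

lemma wDzBar_zero (z : ℂ) : wDzBar (fun _ : ℂ => (0:ℂ)) z = 0 := by
  simp [wDzBar, fderiv_const]

lemma wDzBar_neg (f : ℂ → ℂ) (z : ℂ) : wDzBar (fun w => -(f w)) z = -wDzBar f z := by
  simp [wDzBar, fderiv_neg]; ring

lemma wDzBar_const_mul {f : ℂ → ℂ} {z : ℂ} (hf : DifferentiableAt ℝ f z) (c : ℂ) :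
    wDzBar (fun w => c * f w) z = c * wDzBar f z := by
  simp [wDzBar, fderiv_const_mul hf c]; ring

lemma hasFDerivAt_r (u : ℂ → ℝ) (z : ℂ) (hu : DifferentiableAt ℝ (fun w => (u w : ℂ)) z) :
    HasFDerivAt (fun w => ((Real.exp (u w) / Real.sqrt 2 : ℝ) : ℂ))
      (Complex.ofRealCLM.comp ((Real.sqrt 2)⁻¹ • (Real.exp (u z) • fderiv ℝ
        (fun w => u w) z))) z := by
  have hu' : DifferentiableAt ℝ u z := by
    have := Complex.reCLM.differentiableAt.comp z hu
    rwa [show (⇑Complex.reCLM ∘ fun w => (u w : ℂ)) = u from funext fun w => by simp] at this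
  have hdu := hu'.hasFDerivAt
  exact Complex.ofRealCLM.hasFDerivAt.comp z
    (((hdu.exp.const_smul ((Real.sqrt 2)⁻¹))).congr_of_eventuallyEq
      (Filter.Eventually.of_forall fun w => (div_eq_inv_mul _ _)))

lemma wDzBar_r (u : ℂ → ℝ) (z : ℂ) (hu : DifferentiableAt ℝ (fun w => (u w : ℂ)) z) :
    wDzBar (fun w => ((Real.exp (u w) / Real.sqrt 2 : ℝ) : ℂ)) z
      = ((Real.exp (u z) / Real.sqrt 2 : ℝ) : ℂ) * wDzBar (fun w => (u w : ℂ)) z := by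
  have hu' : DifferentiableAt ℝ u z := by
    have := Complex.reCLM.differentiableAt.comp z hu
    rwa [show (⇑Complex.reCLM ∘ fun w => (u w : ℂ)) = u from funext fun w => by simp] at this
  have hdu := hu'.hasFDerivAt
  have h1 := hasFDerivAt_r u z hu
  have h2 : HasFDerivAt (fun w => (u w : ℂ)) (Complex.ofRealCLM.comp (fderiv ℝ u z)) z :=
    Complex.ofRealCLM.hasFDerivAt.comp z hdu
  rw [wDzBar, wDzBar, h1.fderiv, h2.fderiv]
  simp [Complex.ofReal_div]
  ring

lemma diff_r (u : ℂ → ℝ) (z : ℂ) (hu : DifferentiableAt ℝ (fun w => (u w : ℂ)) z) :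
    DifferentiableAt ℝ (fun w => ((Real.exp (u w) / Real.sqrt 2 : ℝ) : ℂ)) z :=
  (hasFDerivAt_r u z hu).differentiableAt

lemma diff_Ap (r a₁ a₂ b₁ b₂ : ℂ → ℂ) (z : ℂ)
    (hr : DifferentiableAt ℝ r z) (ha₁ : DifferentiableAt ℝ a₁ z)
    (ha₂ : DifferentiableAt ℝ a₂ z) (hb₁ : DifferentiableAt ℝ b₁ z)
    (hb₂ : DifferentiableAt ℝ b₂ z) :
    DifferentiableAt ℝ (fun w => Ap (r w) (a₁ w) (a₂ w) (b₁ w) (b₂ w)) z := by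
  refine differentiableAt_pi.mpr ?_
  intro i
  refine differentiableAt_pi.mpr ?_
  intro j
  fin_cases i <;> fin_cases j <;> simp [Ap] <;> fun_prop

lemma wDzBar_Ap (r a₁ a₂ b₁ b₂ : ℂ → ℂ) (z : ℂ)
    (hr : DifferentiableAt ℝ r z) (ha₁ : DifferentiableAt ℝ a₁ z)
    (ha₂ : DifferentiableAt ℝ a₂ z) (hb₁ : DifferentiableAt ℝ b₁ z)
    (hb₂ : DifferentiableAt ℝ b₂ z) :
    wDzBar (fun w => Ap (r w) (a₁ w) (a₂ w) (b₁ w) (b₂ w)) z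
      = Ap (wDzBar r z) (wDzBar a₁ z) (wDzBar a₂ z) (wDzBar b₁ z) (wDzBar b₂ z) := by
  have hF := diff_Ap r a₁ a₂ b₁ b₂ z hr ha₁ ha₂ hb₁ hb₂
  ext i j
  rw [← wDzBar_entry hF]
  fin_cases i <;> fin_cases j <;>
    simp [Ap, wDzBar_zero, wDzBar_neg, wDzBar_const_mul hr Complex.I,
      wDzBar_const_mul hb₁ Complex.I, wDzBar_const_mul hb₂ Complex.I,
      Matrix.vecHead, Matrix.vecTail]

set_option maxHeartbeats 2000000 in
/-- the tension field of the Gauss map: the matrix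
M = ∂̄A_𝔭 + [B_𝔨, A_𝔭] has the entries A₁, A₂, B₁, B₂ in the indicated positions
and vanishes elsewhere. -/
theorem tension_of_gauss_map
    (U : Set ℂ) (hU : IsOpen U)
    (u : ℂ → ℝ) (a₁ a₂ b₁ b₂ σ : ℂ → ℂ)
    (hu : ∀ z ∈ U, DifferentiableAt ℝ (fun w => (u w : ℂ)) z)
    (ha₁ : ∀ z ∈ U, DifferentiableAt ℝ a₁ z)
    (ha₂ : ∀ z ∈ U, DifferentiableAt ℝ a₂ z)
    (hb₁ : ∀ z ∈ U, DifferentiableAt ℝ b₁ z)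
    (hb₂ : ∀ z ∈ U, DifferentiableAt ℝ b₂ z)
    (hσ : ∀ z ∈ U, DifferentiableAt ℝ σ z)
    (A₁ A₂ B₁ B₂ : ℂ → ℂ)
    (hA₁ : A₁ = fun z => wDzBar a₁ z + wDzBar (fun w => (u w : ℂ)) z * b₁ z
        + a₂ z * (starRingEnd ℂ) (σ z))
    (hA₂ : A₂ = fun z => wDzBar a₂ z + wDzBar (fun w => (u w : ℂ)) z * b₂ z
        - a₁ z * (starRingEnd ℂ) (σ z))
    (hB₁ : B₁ = fun z => wDzBar b₁ z + wDzBar (fun w => (u w : ℂ)) z * a₁ z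
        + b₂ z * (starRingEnd ℂ) (σ z))
    (hB₂ : B₂ = fun z => wDzBar b₂ z + wDzBar (fun w => (u w : ℂ)) z * a₂ z
        - b₁ z * (starRingEnd ℂ) (σ z)) :
    ∀ z ∈ U,
      wDzBar (fun w => Ap ((Real.exp (u w) / Real.sqrt 2 : ℝ) : ℂ)
          (a₁ w) (a₂ w) (b₁ w) (b₂ w)) z
        + (BKfun u σ z * Ap ((Real.exp (u z) / Real.sqrt 2 : ℝ) : ℂ)
              (a₁ z) (a₂ z) (b₁ z) (b₂ z)
           - Ap ((Real.exp (u z) / Real.sqrt 2 : ℝ) : ℂ)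
              (a₁ z) (a₂ z) (b₁ z) (b₂ z) * BKfun u σ z)
      = !![0, 0, 0, 0, 0;
           0, 0, 0, -A₁ z, -A₂ z;
           0, 0, 0, -(Complex.I * B₁ z), -(Complex.I * B₂ z);
           0, A₁ z, Complex.I * B₁ z, 0, 0;
           0, A₂ z, Complex.I * B₂ z, 0, 0] := by
  intro z hz
  rw [wDzBar_Ap _ _ _ _ _ z (diff_r u z (hu z hz)) (ha₁ z hz) (ha₂ z hz) (hb₁ z hz)
    (hb₂ z hz), wDzBar_r u z (hu z hz)]
  ext i j
  fin_cases i <;> fin_cases j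
  all_goals simp [Ap, BKfun, Matrix.mul_apply, Fin.sum_univ_five, hA₁, hA₂, hB₁, hB₂,
    Matrix.vecHead, Matrix.vecTail]
  all_goals try ring_nf
  all_goals try simp [Complex.I_sq]
  all_goals try ring
end
end

section
/- Let U ⊆ ℂ be open and let f : ℂ → EuclideanSpace ℝ (Fin 5) be twice continuously differentiable (ContDiff ℝ 2) on U, regarded componentwise as ℂ-valued, such that for all z ∈ U: Σᵢ fᵢ(z)² = 1 (f takes values in the unit sphere S⁴) and Σᵢ (∂f(z))ᵢ² = 0 (f is conformal). Then for every z ∈ U: (1) Σᵢ (∂̄(∂f)(z))ᵢ·(∂f(z))ᵢ = 0, (2) Σᵢ (∂̄(∂f)(z))ᵢ·conj((∂f(z))ᵢ) = 0, and (3) Σᵢ (∂̄(∂f)(z))ᵢ·fᵢ(z) = −Σᵢ (∂f(z))ᵢ·conj((∂f(z))ᵢ). (Hence f_{z̄z} has no tangential component and satisfies f_{z̄z} = −e^{2u}·f + e^{2u}·H with e^{2u} = ⟨f_z, f_{z̄}⟩, where H is the mean curvature vector.) -/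
open Complex

noncomputable section

/-- A map into ℝ⁵ regarded componentwise as a map into ℂ⁵. -/
def cpx (f : ℂ → EuclideanSpace ℝ (Fin 5)) : ℂ → Fin 5 → ℂ :=
  fun z i => ((f z i : ℝ) : ℂ)

section Helpers

variable {z : ℂ}

lemma wDz_congr {E : Type*} [NormedAddCommGroup E] [NormedSpace ℂ E] {h₁ h₂ : ℂ → E}
    (h : h₁ =ᶠ[nhds z] h₂) : wDz h₁ z = wDz h₂ z := by
  unfold wDz; rw [h.fderiv_eq]

lemma wDzBar_congr {E : Type*} [NormedAddCommGroup E] [NormedSpace ℂ E] {h₁ h₂ : ℂ → E}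
    (h : h₁ =ᶠ[nhds z] h₂) : wDzBar h₁ z = wDzBar h₂ z := by
  unfold wDzBar; rw [h.fderiv_eq]

lemma wDz_eventually_const {h : ℂ → ℂ} {c : ℂ}
    (hc : h =ᶠ[nhds z] fun _ => c) : wDz h z = 0 := by
  unfold wDz; rw [hc.fderiv_eq]; simp

lemma wDzBar_eventually_const {h : ℂ → ℂ} {c : ℂ}
    (hc : h =ᶠ[nhds z] fun _ => c) : wDzBar h z = 0 := by
  unfold wDzBar; rw [hc.fderiv_eq]; simp

lemma wDz_mul {h k : ℂ → ℂ} (hh : DifferentiableAt ℝ h z) (hk : DifferentiableAt ℝ k z) :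
    wDz (fun w => h w * k w) z = wDz h z * k z + h z * wDz k z := by
  simp only [wDz, fderiv_fun_mul hh hk, ContinuousLinearMap.add_apply,
    ContinuousLinearMap.smul_apply, smul_eq_mul]
  ring

lemma wDzBar_mul {h k : ℂ → ℂ} (hh : DifferentiableAt ℝ h z) (hk : DifferentiableAt ℝ k z) :
    wDzBar (fun w => h w * k w) z = wDzBar h z * k z + h z * wDzBar k z := by
  simp only [wDzBar, fderiv_fun_mul hh hk, ContinuousLinearMap.add_apply,
    ContinuousLinearMap.smul_apply, smul_eq_mul]
  ring

lemma wDz_sum {ι : Type*} {s : Finset ι} {h : ι → ℂ → ℂ}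
    (H : ∀ i ∈ s, DifferentiableAt ℝ (h i) z) :
    wDz (fun w => ∑ i ∈ s, h i w) z = ∑ i ∈ s, wDz (h i) z := by
  simp only [wDz, fderiv_fun_sum H, ContinuousLinearMap.sum_apply, smul_eq_mul]
  rw [Finset.mul_sum, ← Finset.sum_sub_distrib, Finset.mul_sum]

lemma wDzBar_sum {ι : Type*} {s : Finset ι} {h : ι → ℂ → ℂ}
    (H : ∀ i ∈ s, DifferentiableAt ℝ (h i) z) :
    wDzBar (fun w => ∑ i ∈ s, h i w) z = ∑ i ∈ s, wDzBar (h i) z := by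
  simp only [wDzBar, fderiv_fun_sum H, ContinuousLinearMap.sum_apply, smul_eq_mul]
  rw [Finset.mul_sum, ← Finset.sum_add_distrib, Finset.mul_sum]

lemma fderiv_conj' {h : ℂ → ℂ} (hh : DifferentiableAt ℝ h z) (v : ℂ) :
    fderiv ℝ (fun w => (starRingEnd ℂ) (h w)) z v = (starRingEnd ℂ) (fderiv ℝ h z v) := by
  have hL : HasFDerivAt (fun w => (starRingEnd ℂ) (h w))
      ((Complex.conjCLE.toContinuousLinearMap).comp (fderiv ℝ h z)) z :=
    (Complex.conjCLE.toContinuousLinearMap.hasFDerivAt.comp z hh.hasFDerivAt)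
  rw [hL.fderiv]
  rfl

lemma wDz_conj {h : ℂ → ℂ} (hh : DifferentiableAt ℝ h z) :
    wDz (fun w => (starRingEnd ℂ) (h w)) z = (starRingEnd ℂ) (wDzBar h z) := by
  simp only [wDz, wDzBar, fderiv_conj' hh, smul_eq_mul, map_mul, map_sub, map_add, map_inv₀, map_ofNat, Complex.conj_I]
  ring

lemma wDzBar_conj {h : ℂ → ℂ} (hh : DifferentiableAt ℝ h z) :
    wDzBar (fun w => (starRingEnd ℂ) (h w)) z = (starRingEnd ℂ) (wDz h z) := by
  simp only [wDz, wDzBar, fderiv_conj' hh, smul_eq_mul, map_mul, map_sub, map_add, map_inv₀, map_ofNat, Complex.conj_I]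
  ring

lemma differentiableAt_wDz {h : ℂ → ℂ} (hh : ContDiffAt ℝ 2 h z) :
    DifferentiableAt ℝ (fun w => wDz h w) z := by
  have hd : DifferentiableAt ℝ (fderiv ℝ h) z :=
    (hh.fderiv_right (m := 1) (by norm_num)).differentiableAt one_ne_zero
  have h1 : DifferentiableAt ℝ (fun w => fderiv ℝ h w 1) z :=
    hd.clm_apply (differentiableAt_const _)
  have h2 : DifferentiableAt ℝ (fun w => fderiv ℝ h w Complex.I) z :=
    hd.clm_apply (differentiableAt_const _)
  exact ((h1.sub (h2.const_smul Complex.I)).const_smul (2⁻¹ : ℂ))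

lemma differentiableAt_wDzBar {h : ℂ → ℂ} (hh : ContDiffAt ℝ 2 h z) :
    DifferentiableAt ℝ (fun w => wDzBar h w) z := by
  have hd : DifferentiableAt ℝ (fderiv ℝ h) z :=
    (hh.fderiv_right (m := 1) (by norm_num)).differentiableAt one_ne_zero
  have h1 : DifferentiableAt ℝ (fun w => fderiv ℝ h w 1) z :=
    hd.clm_apply (differentiableAt_const _)
  have h2 : DifferentiableAt ℝ (fun w => fderiv ℝ h w Complex.I) z :=
    hd.clm_apply (differentiableAt_const _)
  exact ((h1.add (h2.const_smul Complex.I)).const_smul (2⁻¹ : ℂ))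

lemma wDz_wDzBar_comm {h : ℂ → ℂ} (hh : ContDiffAt ℝ 2 h z) :
    wDz (fun w => wDzBar h w) z = wDzBar (fun w => wDz h w) z := by
  have hd : DifferentiableAt ℝ (fderiv ℝ h) z :=
    (hh.fderiv_right (m := 1) (by norm_num)).differentiableAt one_ne_zero
  set S := fderiv ℝ (fderiv ℝ h) z with hS
  have happ : ∀ v : ℂ, DifferentiableAt ℝ (fun w => fderiv ℝ h w v) z := fun v =>
    hd.clm_apply (differentiableAt_const _)
  have hfd : ∀ u v : ℂ, fderiv ℝ (fun w => fderiv ℝ h w v) z u = S u v := by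
    intro u v
    rw [fderiv_clm_apply hd (differentiableAt_const v)]
    simp [hS]
  have hsymm : S 1 Complex.I = S Complex.I 1 := (hh.isSymmSndFDerivAt (by norm_num)) 1 Complex.I
  have e1 : ∀ u : ℂ, fderiv ℝ (fun w => wDzBar h w) z u = (2⁻¹ : ℂ) * (S u 1 + Complex.I * S u Complex.I) := by
    intro u
    have : (fun w => wDzBar h w) = fun w =>
        (2⁻¹ : ℂ) • ((fun w => fderiv ℝ h w 1) w + Complex.I • (fun w => fderiv ℝ h w Complex.I) w) := rfl
    rw [this, fderiv_fun_const_smul (f := fun w => (fun w => fderiv ℝ h w 1) w + Complex.I • (fun w => fderiv ℝ h w Complex.I) w)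
        ((happ 1).add ((happ Complex.I).const_smul Complex.I)) (2⁻¹ : ℂ),
      fderiv_fun_add (g := fun w => Complex.I • fderiv ℝ h w Complex.I) (happ 1) ((happ Complex.I).const_smul Complex.I),
      fderiv_fun_const_smul (happ Complex.I) Complex.I]
    simp only [ContinuousLinearMap.add_apply, ContinuousLinearMap.smul_apply,
      ContinuousLinearMap.coe_smul', Pi.smul_apply, hfd, smul_eq_mul]
    try ring
  have e2 : ∀ u : ℂ, fderiv ℝ (fun w => wDz h w) z u = (2⁻¹ : ℂ) * (S u 1 - Complex.I * S u Complex.I) := by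
    intro u
    have : (fun w => wDz h w) = fun w =>
        (2⁻¹ : ℂ) • ((fun w => fderiv ℝ h w 1) w - Complex.I • (fun w => fderiv ℝ h w Complex.I) w) := rfl
    rw [this, fderiv_fun_const_smul (f := fun w => (fun w => fderiv ℝ h w 1) w - Complex.I • (fun w => fderiv ℝ h w Complex.I) w)
        ((happ 1).sub ((happ Complex.I).const_smul Complex.I)) (2⁻¹ : ℂ),
      fderiv_fun_sub (g := fun w => Complex.I • fderiv ℝ h w Complex.I) (happ 1) ((happ Complex.I).const_smul Complex.I),
      fderiv_fun_const_smul (happ Complex.I) Complex.I]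
    simp only [ContinuousLinearMap.sub_apply, ContinuousLinearMap.smul_apply,
      ContinuousLinearMap.coe_smul', Pi.smul_apply, hfd, smul_eq_mul]
    try ring
  have L : wDz (fun w => wDzBar h w) z
      = (2⁻¹ : ℂ) * ((2⁻¹ : ℂ) * (S 1 1 + Complex.I * S 1 Complex.I)
        - Complex.I * ((2⁻¹ : ℂ) * (S Complex.I 1 + Complex.I * S Complex.I Complex.I))) := by
    show (2⁻¹ : ℂ) • (fderiv ℝ (fun w => wDzBar h w) z 1
        - Complex.I • fderiv ℝ (fun w => wDzBar h w) z Complex.I) = _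
    rw [e1, e1]
    try simp [smul_eq_mul]
  have R : wDzBar (fun w => wDz h w) z
      = (2⁻¹ : ℂ) * ((2⁻¹ : ℂ) * (S 1 1 - Complex.I * S 1 Complex.I)
        + Complex.I * ((2⁻¹ : ℂ) * (S Complex.I 1 - Complex.I * S Complex.I Complex.I))) := by
    show (2⁻¹ : ℂ) • (fderiv ℝ (fun w => wDz h w) z 1
        + Complex.I • fderiv ℝ (fun w => wDz h w) z Complex.I) = _
    rw [e2, e2]
    try simp [smul_eq_mul]
  rw [L, R, hsymm]
  ring

lemma wDz_apply {F : ℂ → Fin 5 → ℂ} (hF : DifferentiableAt ℝ F z) (i : Fin 5) :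
    wDz F z i = wDz (fun w => F w i) z := by
  have key : ∀ v : ℂ, fderiv ℝ (fun w => F w i) z v = fderiv ℝ F z v i := by
    intro v
    have hL := (ContinuousLinearMap.proj (R := ℝ) (φ := fun _ : Fin 5 => ℂ) i).hasFDerivAt.comp
      z hF.hasFDerivAt
    rw [show (fun w => F w i)
        = (⇑(ContinuousLinearMap.proj (R := ℝ) (φ := fun _ : Fin 5 => ℂ) i) ∘ F) from rfl,
      hL.fderiv]
    rfl
  simp only [wDz, key, Pi.smul_apply, Pi.sub_apply, smul_eq_mul]

lemma wDzBar_apply {F : ℂ → Fin 5 → ℂ} (hF : DifferentiableAt ℝ F z) (i : Fin 5) :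
    wDzBar F z i = wDzBar (fun w => F w i) z := by
  have key : ∀ v : ℂ, fderiv ℝ (fun w => F w i) z v = fderiv ℝ F z v i := by
    intro v
    have hL := (ContinuousLinearMap.proj (R := ℝ) (φ := fun _ : Fin 5 => ℂ) i).hasFDerivAt.comp
      z hF.hasFDerivAt
    rw [show (fun w => F w i)
        = (⇑(ContinuousLinearMap.proj (R := ℝ) (φ := fun _ : Fin 5 => ℂ) i) ∘ F) from rfl,
      hL.fderiv]
    rfl
  simp only [wDzBar, key, Pi.smul_apply, Pi.add_apply, smul_eq_mul]

end Helpers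

/-- component functions -/
def gc (f : ℂ → EuclideanSpace ℝ (Fin 5)) (i : Fin 5) : ℂ → ℂ := fun w => ((f w i : ℝ) : ℂ)

/-- Wirtinger z-derivative of components -/
def Dgc (f : ℂ → EuclideanSpace ℝ (Fin 5)) (i : Fin 5) : ℂ → ℂ := fun w => wDz (gc f i) w

/-- for a conformal map into the unit sphere S⁴, f_{z̄z} has no
tangential component and ⟨f_{z̄z}, f⟩ = −⟨f_z, f_{z̄}⟩. -/
theorem fzbarz_is_normal
    (U : Set ℂ) (hU : IsOpen U)
    (f : ℂ → EuclideanSpace ℝ (Fin 5))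
    (hf : ContDiffOn ℝ 2 f U)
    (hsphere : ∀ z ∈ U, ∑ i : Fin 5, cpx f z i ^ 2 = 1)
    (hconf : ∀ z ∈ U, ∑ i : Fin 5, (wDz (cpx f) z i) ^ 2 = 0) :
    ∀ z ∈ U,
      (∑ i : Fin 5, wDzBar (fun w => wDz (cpx f) w) z i * wDz (cpx f) z i = 0) ∧
      (∑ i : Fin 5, wDzBar (fun w => wDz (cpx f) w) z i
          * (starRingEnd ℂ) (wDz (cpx f) z i) = 0) ∧
      (∑ i : Fin 5, wDzBar (fun w => wDz (cpx f) w) z i * cpx f z i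
        = -∑ i : Fin 5, wDz (cpx f) z i * (starRingEnd ℂ) (wDz (cpx f) z i)) := by
  intro z hz
  have hgC : ∀ (i : Fin 5), ∀ w ∈ U, ContDiffAt ℝ 2 (gc f i) w := by
    intro i w hw
    have hfw : ContDiffAt ℝ 2 f w := hf.contDiffAt (hU.mem_nhds hw)
    have hL : ContDiff ℝ 2 (fun x : EuclideanSpace ℝ (Fin 5) => ((x i : ℝ) : ℂ)) :=
      (Complex.ofRealCLM.comp
        (EuclideanSpace.proj i : EuclideanSpace ℝ (Fin 5) →L[ℝ] ℝ)).contDiff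
    exact hL.contDiffAt.comp w hfw
  have hgd : ∀ (i : Fin 5), ∀ w ∈ U, DifferentiableAt ℝ (gc f i) w := fun i w hw =>
    (hgC i w hw).differentiableAt (by norm_num)
  have hcpx : ∀ w ∈ U, DifferentiableAt ℝ (cpx f) w := by
    intro w hw
    have hfw : DifferentiableAt ℝ f w :=
      (hf.contDiffAt (hU.mem_nhds hw)).differentiableAt (by norm_num)
    have hL : Differentiable ℝ
        (fun x : EuclideanSpace ℝ (Fin 5) => (fun i => ((x i : ℝ) : ℂ) : Fin 5 → ℂ)) :=
      (ContinuousLinearMap.pi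
        (fun i : Fin 5 => Complex.ofRealCLM.comp (EuclideanSpace.proj i))).differentiable
    exact (hL.differentiableAt).comp w hfw
  have hDgd : ∀ (i : Fin 5), ∀ w ∈ U, DifferentiableAt ℝ (Dgc f i) w := fun i w hw =>
    differentiableAt_wDz (hgC i w hw)
  have hDbgd : ∀ (i : Fin 5), ∀ w ∈ U, DifferentiableAt ℝ (fun u => wDzBar (gc f i) u) w :=
    fun i w hw => differentiableAt_wDzBar (hgC i w hw)
  have hcomp : ∀ w ∈ U, ∀ i : Fin 5, wDz (cpx f) w i = Dgc f i w := fun w hw i =>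
    wDz_apply (hcpx w hw) i
  have hbar : ∀ w ∈ U, ∀ i : Fin 5, wDzBar (gc f i) w = (starRingEnd ℂ) (Dgc f i w) := by
    intro w hw i
    have h1 : (fun u => (starRingEnd ℂ) (gc f i u)) = gc f i := by
      funext u; exact Complex.conj_ofReal _
    have h2 := wDzBar_conj (z := w) (hgd i w hw)
    rw [h1] at h2
    exact h2
  have hP : ∀ w ∈ U, ∑ i : Fin 5, gc f i w * Dgc f i w = 0 := by
    intro w hw
    have h0 : wDz (fun u => ∑ i : Fin 5, gc f i u * gc f i u) w = 0 :=
      wDz_eventually_const (c := 1) (Filter.eventuallyEq_of_mem (hU.mem_nhds hw)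
        (fun u hu => by have := hsphere u hu; simp only [sq] at this; exact this))
    have h1 : wDz (fun u => ∑ i : Fin 5, gc f i u * gc f i u) w
        = ∑ i : Fin 5, (Dgc f i w * gc f i w + gc f i w * Dgc f i w) := by
      rw [wDz_sum (h := fun i u => gc f i u * gc f i u) (fun i _ => (hgd i w hw).mul (hgd i w hw))]
      exact Finset.sum_congr rfl fun i _ => wDz_mul (hgd i w hw) (hgd i w hw)
    have h2 : ∑ i : Fin 5, (Dgc f i w * gc f i w + gc f i w * Dgc f i w)
        = (2 : ℂ) * ∑ i : Fin 5, gc f i w * Dgc f i w := by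
      rw [Finset.mul_sum]; exact Finset.sum_congr rfl fun i _ => by ring
    have h3 : (2 : ℂ) * ∑ i : Fin 5, gc f i w * Dgc f i w = 0 := by rw [← h2, ← h1, h0]
    exact (mul_eq_zero.mp h3).resolve_left two_ne_zero
  have hQ : ∀ w ∈ U, ∑ i : Fin 5, Dgc f i w * Dgc f i w = 0 := by
    intro w hw
    have h1 := hconf w hw
    simp only [sq] at h1
    calc ∑ i : Fin 5, Dgc f i w * Dgc f i w
        = ∑ i : Fin 5, wDz (cpx f) w i * wDz (cpx f) w i :=
          Finset.sum_congr rfl fun i _ => by rw [hcomp w hw i]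
      _ = 0 := h1
  have hR : ∀ w ∈ U, ∑ i : Fin 5, wDzBar (gc f i) w * wDzBar (gc f i) w = 0 := by
    intro w hw
    have h1 : ∑ i : Fin 5, wDzBar (gc f i) w * wDzBar (gc f i) w
        = (starRingEnd ℂ) (∑ i : Fin 5, Dgc f i w * Dgc f i w) := by
      rw [map_sum]
      exact Finset.sum_congr rfl fun i _ => by rw [hbar w hw i, map_mul]
    rw [h1, hQ w hw, map_zero]
  have hFdiff : DifferentiableAt ℝ (fun w => wDz (cpx f) w) z := by
    apply differentiableAt_pi.2
    intro i
    have hEv : (fun w => wDz (cpx f) w i) =ᶠ[nhds z] Dgc f i :=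
      Filter.eventuallyEq_of_mem (hU.mem_nhds hz) (fun w hw => hcomp w hw i)
    exact (hDgd i z hz).congr_of_eventuallyEq hEv
  have hT : ∀ i : Fin 5, wDzBar (fun w => wDz (cpx f) w) z i = wDzBar (Dgc f i) z := by
    intro i
    rw [wDzBar_apply hFdiff i]
    exact wDzBar_congr (Filter.eventuallyEq_of_mem (hU.mem_nhds hz) (fun w hw => hcomp w hw i))
  refine ⟨?_, ?_, ?_⟩
  · have e0 : wDzBar (fun w => ∑ i : Fin 5, Dgc f i w * Dgc f i w) z = 0 :=
      wDzBar_eventually_const (c := 0)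
        (Filter.eventuallyEq_of_mem (hU.mem_nhds hz) fun w hw => hQ w hw)
    have e1 : wDzBar (fun w => ∑ i : Fin 5, Dgc f i w * Dgc f i w) z
        = ∑ i : Fin 5, (wDzBar (Dgc f i) z * Dgc f i z + Dgc f i z * wDzBar (Dgc f i) z) := by
      rw [wDzBar_sum (h := fun i u => Dgc f i u * Dgc f i u)
        (fun i _ => (hDgd i z hz).mul (hDgd i z hz))]
      exact Finset.sum_congr rfl fun i _ => wDzBar_mul (hDgd i z hz) (hDgd i z hz)
    have e2 : ∑ i : Fin 5, (wDzBar (Dgc f i) z * Dgc f i z + Dgc f i z * wDzBar (Dgc f i) z)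
        = (2 : ℂ) * ∑ i : Fin 5, wDzBar (Dgc f i) z * Dgc f i z := by
      rw [Finset.mul_sum]; exact Finset.sum_congr rfl fun i _ => by ring
    have e3 : (2 : ℂ) * ∑ i : Fin 5, wDzBar (Dgc f i) z * Dgc f i z = 0 := by
      rw [← e2, ← e1, e0]
    have e4 := (mul_eq_zero.mp e3).resolve_left two_ne_zero
    calc ∑ i : Fin 5, wDzBar (fun w => wDz (cpx f) w) z i * wDz (cpx f) z i
        = ∑ i : Fin 5, wDzBar (Dgc f i) z * Dgc f i z :=
          Finset.sum_congr rfl fun i _ => by rw [hT i, hcomp z hz i]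
      _ = 0 := e4
  · have e0 : wDz (fun w => ∑ i : Fin 5, wDzBar (gc f i) w * wDzBar (gc f i) w) z = 0 :=
      wDz_eventually_const (c := 0)
        (Filter.eventuallyEq_of_mem (hU.mem_nhds hz) fun w hw => hR w hw)
    have e1 : wDz (fun w => ∑ i : Fin 5, wDzBar (gc f i) w * wDzBar (gc f i) w) z
        = ∑ i : Fin 5, (wDz (fun u => wDzBar (gc f i) u) z * wDzBar (gc f i) z
            + wDzBar (gc f i) z * wDz (fun u => wDzBar (gc f i) u) z) := by
      rw [wDz_sum (h := fun i u => wDzBar (gc f i) u * wDzBar (gc f i) u)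
        (fun i _ => (hDbgd i z hz).mul (hDbgd i z hz))]
      exact Finset.sum_congr rfl fun i _ => wDz_mul (hDbgd i z hz) (hDbgd i z hz)
    have hcm : ∀ i : Fin 5, wDz (fun u => wDzBar (gc f i) u) z = wDzBar (Dgc f i) z :=
      fun i => wDz_wDzBar_comm (hgC i z hz)
    have e2 : ∑ i : Fin 5, (wDz (fun u => wDzBar (gc f i) u) z * wDzBar (gc f i) z
            + wDzBar (gc f i) z * wDz (fun u => wDzBar (gc f i) u) z)
        = (2 : ℂ) * ∑ i : Fin 5, wDzBar (Dgc f i) z * (starRingEnd ℂ) (Dgc f i z) := by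
      rw [Finset.mul_sum]
      exact Finset.sum_congr rfl fun i _ => by rw [hcm i, hbar z hz i]; ring
    have e3 : (2 : ℂ) * ∑ i : Fin 5, wDzBar (Dgc f i) z * (starRingEnd ℂ) (Dgc f i z) = 0 := by
      rw [← e2, ← e1, e0]
    have e4 := (mul_eq_zero.mp e3).resolve_left two_ne_zero
    calc ∑ i : Fin 5, wDzBar (fun w => wDz (cpx f) w) z i
          * (starRingEnd ℂ) (wDz (cpx f) z i)
        = ∑ i : Fin 5, wDzBar (Dgc f i) z * (starRingEnd ℂ) (Dgc f i z) :=
          Finset.sum_congr rfl fun i _ => by rw [hT i, hcomp z hz i]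
      _ = 0 := e4
  · have e0 : wDzBar (fun w => ∑ i : Fin 5, gc f i w * Dgc f i w) z = 0 :=
      wDzBar_eventually_const (c := 0)
        (Filter.eventuallyEq_of_mem (hU.mem_nhds hz) fun w hw => hP w hw)
    have e1 : wDzBar (fun w => ∑ i : Fin 5, gc f i w * Dgc f i w) z
        = ∑ i : Fin 5, ((starRingEnd ℂ) (Dgc f i z) * Dgc f i z
            + gc f i z * wDzBar (Dgc f i) z) := by
      rw [wDzBar_sum (h := fun i u => gc f i u * Dgc f i u)
        (fun i _ => (hgd i z hz).mul (hDgd i z hz))]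
      exact Finset.sum_congr rfl fun i _ => by
        rw [wDzBar_mul (hgd i z hz) (hDgd i z hz), hbar z hz i]
    have e2 : ∑ i : Fin 5, ((starRingEnd ℂ) (Dgc f i z) * Dgc f i z
            + gc f i z * wDzBar (Dgc f i) z) = 0 := by rw [← e1, e0]
    rw [Finset.sum_add_distrib] at e2
    calc ∑ i : Fin 5, wDzBar (fun w => wDz (cpx f) w) z i * cpx f z i
        = ∑ i : Fin 5, gc f i z * wDzBar (Dgc f i) z :=
          Finset.sum_congr rfl fun i _ => by
            rw [hT i, show cpx f z i = gc f i z from rfl]; ring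
      _ = -∑ i : Fin 5, (starRingEnd ℂ) (Dgc f i z) * Dgc f i z := by
          linear_combination e2
      _ = -∑ i : Fin 5, wDz (cpx f) z i * (starRingEnd ℂ) (wDz (cpx f) z i) := by
          rw [neg_inj]
          exact Finset.sum_congr rfl fun i _ => by rw [hcomp z hz i]; ring
end
end
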